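/- arXiv:1407.1183 — 5 statements merged into one kernel-verified Lean document; each statement's English description precedes it below -/
import Mathlib

section
/- Let Δ ⊂ ℝ^n be a compact convex set. Then ivol(Δ + Π_n) ≥ vol(Δ), where Δ + Π_n denotes the Minkowski sum with the unit cube. Moreover, for any integral box Π one has ivol(Π ∩ (Δ + Π_n)) ≥ vol(Π ∩ Δ). -/
open MeasureTheory Pointwise ENNReal NNReal

/-- The unit cube `Π_n = [-1,1]^n` in `ℝ^n`. -/
def unitCube (n : ℕ) : Set (Fin n → ℝ) := {x | ∀ i, x i ∈ Set.Icc (-1 : ℝ) 1}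

/-- The set of integer points of a set `S ⊆ ℝ^n`. -/
def intPts {n : ℕ} (S : Set (Fin n → ℝ)) : Set (Fin n → ℝ) :=
  {x ∈ S | ∀ i, ∃ k : ℤ, x i = (k : ℝ)}

/-- An integral box `[a_1,b_1] × ⋯ × [a_n,b_n]`. -/
def intBox {n : ℕ} (a b : Fin n → ℤ) : Set (Fin n → ℝ) :=
  {x | ∀ i, x i ∈ Set.Icc (a i : ℝ) (b i : ℝ)}

private lemma round_mono' {x y : ℝ} (h : x ≤ y) : round x ≤ round y := by
  rw [round_eq, round_eq]; exact Int.floor_mono (by linarith)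

/-- Integer points of a bounded set form a finite set. -/
private lemma intPts_finite {n : ℕ} {S : Set (Fin n → ℝ)} (hS : Bornology.IsBounded S) :
    (intPts S).Finite := by
  obtain ⟨R, hR⟩ := hS.subset_closedBall 0
  set M : ℤ := ⌈R⌉
  have hfin : (Set.univ.pi fun _ : Fin n => Set.Icc (-M) M).Finite :=
    Set.Finite.pi fun _ => Set.finite_Icc _ _
  apply Set.Finite.subset (hfin.image (fun k : Fin n → ℤ => fun i => (k i : ℝ)))
  rintro x ⟨hxS, hxint⟩
  refine ⟨fun i => ⌊x i⌋, ?_, ?_⟩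
  · intro i _
    obtain ⟨k, hk⟩ := hxint i
    have hx : x i = (⌊x i⌋ : ℝ) := by rw [hk]; simp
    have hb : |x i| ≤ R := by
      have := hR hxS
      simp only [Metric.mem_closedBall, dist_zero_right] at this
      calc |x i| = ‖x i‖ := rfl
        _ ≤ ‖x‖ := norm_le_pi_norm x i
        _ ≤ R := this
    have hRM : R ≤ (M : ℝ) := Int.le_ceil R
    rw [hx] at hb
    rw [abs_le] at hb
    constructor
    · exact_mod_cast (by linarith : -(M:ℝ) ≤ (⌊x i⌋:ℝ))
    · exact_mod_cast (by linarith : (⌊x i⌋:ℝ) ≤ (M:ℝ))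
  · funext i
    obtain ⟨k, hk⟩ := hxint i
    show (⌊x i⌋ : ℝ) = x i
    rw [hk, Int.floor_intCast]

/-- Covering lemma: if the coordinatewise rounding of every point of `S` lies in a finite set
`P`, then `vol S ≤ #P`. -/
private lemma vol_le_card {n : ℕ} (S P : Set (Fin n → ℝ)) (hP : P.Finite)
    (h : ∀ x ∈ S, (fun i => ((round (x i) : ℤ) : ℝ)) ∈ P) :
    (volume S).toReal ≤ (P.ncard : ℝ) := by
  classical
  set F := hP.toFinset
  have hsub : S ⊆ ⋃ k ∈ F, Set.univ.pi fun i => Set.Icc (k i - 1/2) (k i + 1/2) := by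
    intro x hx
    refine Set.mem_biUnion (hP.mem_toFinset.2 (h x hx)) ?_
    intro i _
    have := abs_sub_round (x i)
    rw [abs_le] at this
    constructor <;> [skip; skip] <;> push_cast <;> linarith [this.1, this.2]
  have hvols : ∀ k : Fin n → ℝ,
      volume (Set.univ.pi fun i => Set.Icc (k i - 1/2) (k i + 1/2)) = 1 := by
    intro k
    rw [volume_pi_pi]
    simp [Real.volume_Icc]
    norm_num
  have h1 : volume S ≤ (F.card : ℝ≥0∞) := by
    calc volume S ≤ volume (⋃ k ∈ F, Set.univ.pi fun i => Set.Icc (k i - 1/2) (k i + 1/2)) :=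
          measure_mono hsub
      _ ≤ ∑ k ∈ F, volume (Set.univ.pi fun i => Set.Icc (k i - 1/2) (k i + 1/2)) :=
          measure_biUnion_finset_le F _
      _ = F.card := by rw [Finset.sum_congr rfl fun k _ => hvols k]; simp
  have := ENNReal.toReal_mono (by simp) h1
  simpa [Set.ncard_eq_toFinset_card P hP] using this

/-- Lemma: for a compact convex `Δ ⊆ ℝ^n`, `ivol(Δ + Π_n) ≥ vol(Δ)`; moreover for any
integral box `Π`, `ivol(Π ∩ (Δ + Π_n)) ≥ vol(Π ∩ Δ)`. -/
theorem stmt_6 (n : ℕ) (Δ : Set (Fin n → ℝ)) (hΔc : IsCompact Δ) (hΔconv : Convex ℝ Δ) :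
    (volume Δ).toReal ≤ ((intPts (Δ + unitCube n)).ncard : ℝ) ∧
    ∀ a b : Fin n → ℤ,
      (volume (intBox a b ∩ Δ)).toReal ≤
        ((intPts (intBox a b ∩ (Δ + unitCube n))).ncard : ℝ) := by
  have hcube : Bornology.IsBounded (unitCube n) := by
    apply Bornology.IsBounded.subset (Metric.isBounded_closedBall (x := (0 : Fin n → ℝ)) (r := 1))
    intro x hx
    simp only [Metric.mem_closedBall, dist_zero_right]
    refine pi_norm_le_iff_of_nonneg zero_le_one |>.2 fun i => ?_
    rw [Real.norm_eq_abs, abs_le]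
    exact ⟨(hx i).1, (hx i).2⟩
  have hsum : Bornology.IsBounded (Δ + unitCube n) := hΔc.isBounded.add hcube
  -- rounding a point of Δ lands in intPts (Δ + unitCube n)
  have hround : ∀ x ∈ Δ, (fun i => ((round (x i) : ℤ) : ℝ)) ∈ intPts (Δ + unitCube n) := by
    intro x hx
    refine ⟨?_, fun i => ⟨round (x i), rfl⟩⟩
    refine Set.mem_add.2 ⟨x, hx, fun i => (round (x i) : ℝ) - x i, ?_, by funext i; simp only [Pi.add_apply]; ring⟩
    intro i
    have := abs_sub_round (x i)
    rw [abs_le] at this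
    constructor
    · show (-1:ℝ) ≤ (round (x i):ℝ) - x i
      linarith [this.2]
    · show (round (x i):ℝ) - x i ≤ 1
      linarith [this.1]
  constructor
  · exact vol_le_card Δ _ (intPts_finite hsum) hround
  · intro a b
    refine vol_le_card _ _ (intPts_finite (hsum.subset Set.inter_subset_right)) ?_
    rintro x ⟨hxb, hxΔ⟩
    obtain ⟨hmem, hint⟩ := hround x hxΔ
    refine ⟨⟨?_, hmem⟩, hint⟩
    intro i
    have h1 : (a i : ℝ) ≤ x i := (hxb i).1
    have h2 : x i ≤ (b i : ℝ) := (hxb i).2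
    have l1 : a i ≤ round (x i) := by
      have := round_mono' h1; rwa [round_intCast] at this
    have l2 : round (x i) ≤ b i := by
      have := round_mono' h2; rwa [round_intCast] at this
    constructor
    · show (a i:ℝ) ≤ (round (x i):ℝ); exact_mod_cast l1
    · show (round (x i):ℝ) ≤ (b i:ℝ); exact_mod_cast l2
end

section
/- Let n ≥ 1, let Δ ⊂ ℝ^n be a compact convex set with n·Π_n ⊆ Δ, and let d > 2n be an integer. Then ivol(Δ ∩ (d−1)Π_n) ≥ (1/8)·vol(Δ ∩ dΠ_n). -/
open MeasureTheory

/-- The cube `[-s,s]^n` in `ℝ^n`. -/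
def cube (n : ℕ) (s : ℝ) : Set (Fin n → ℝ) := {x | ∀ i, x i ∈ Set.Icc (-s) s}

/-- Lemma: if `Δ ⊆ ℝ^n` is compact convex with `n·Π_n ⊆ Δ` and `d > 2n` is an integer, then
`ivol(Δ ∩ (d-1)Π_n) ≥ (1/8)·vol(Δ ∩ dΠ_n)`. -/
theorem stmt_9 (n : ℕ) (hn : 1 ≤ n) (Δ : Set (Fin n → ℝ))
    (hΔc : IsCompact Δ) (hΔconv : Convex ℝ Δ) (hcube : cube n n ⊆ Δ)
    (d : ℕ) (hd : 2 * n < d) :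
    (1 / 8 : ℝ) * (volume (Δ ∩ cube n d)).toReal ≤
      ((intPts (Δ ∩ cube n ((d : ℝ) - 1))).ncard : ℝ) := by
  have hn0 : (1:ℝ) ≤ n := by exact_mod_cast hn
  have hdn : 2 * (n:ℝ) < d := by exact_mod_cast hd
  have hd1 : (1:ℝ) ≤ d := by linarith
  set L : ℝ := 1 - 1/(2*n) with hLdef
  clear_value L
  have h2n : (0:ℝ) < 2*n := by linarith
  have hhalf : (1:ℝ)/(2*(n:ℝ)) ≤ 1/2 := by
    apply one_div_le_one_div_of_le (by norm_num) (by linarith)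
  have hhalf0 : (0:ℝ) < 1/(2*(n:ℝ)) := by positivity
  have hLpos : 0 < L := by simp only [hLdef]; linarith
  have hL1 : L ≤ 1 := by simp only [hLdef]; linarith
  have h1L : 1 - L = 1/(2*n) := by simp [hLdef]
  have h1Lpos : 0 < 1 - L := by rw [h1L]; positivity
  set S := Δ ∩ cube n (d:ℝ) with hSdef
  set Z := intPts (Δ ∩ cube n ((d : ℝ) - 1)) with hZdef
  -- the rounding map
  set r : (Fin n → ℝ) → (Fin n → ℝ) := fun x i => ((round (L * x i) : ℤ) : ℝ) with hrdef
  -- key: for x in S, r x lands in Z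
  have hround : ∀ y : ℝ, |(round y : ℤ) - y| ≤ 1/2 := by
    intro y
    rw [abs_sub_comm]
    exact abs_sub_round y
  have key : ∀ x ∈ S, r x ∈ Z := by
    rintro x ⟨hxΔ, hxC⟩
    have habs : ∀ i, |r x i - L * x i| ≤ 1/2 := fun i => hround (L * x i)
    have hxb : ∀ i, |x i| ≤ d := by
      intro i
      rcases hxC i with ⟨h1, h2⟩
      rw [abs_le]; exact ⟨h1, h2⟩
    have hrb : ∀ i, |r x i| < d := by
      intro i
      have h1 : |r x i| ≤ |L * x i| + 1/2 := by
        have ha := habs i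
        have hb : |r x i| - |L * x i| ≤ |r x i - L * x i| := abs_sub_abs_le_abs_sub _ _
        linarith
      have h2 : |L * x i| ≤ L * d := by
        rw [abs_mul, abs_of_pos hLpos]
        exact mul_le_mul_of_nonneg_left (hxb i) hLpos.le
      have h3 : L * d + 1/2 < d := by
        have hdd : (n:ℝ) < d := by linarith
        have : (1 - L) * d > 1/2 := by
          rw [h1L]
          rw [gt_iff_lt, show (1:ℝ)/2 = (1/(2*n)) * n by field_simp]
          exact mul_lt_mul_of_pos_left hdd (by positivity)
        nlinarith
      linarith
    refine ⟨⟨?_, ?_⟩, fun i => ⟨round (L * x i), rfl⟩⟩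
    · -- r x ∈ Δ by convexity
      set w : Fin n → ℝ := fun i => (r x i - L * x i) / (1 - L) with hwdef
      have hw : w ∈ cube n n := by
        intro i
        have : |w i| ≤ n := by
          rw [hwdef]
          simp only []
          rw [abs_div, abs_of_pos h1Lpos, div_le_iff₀ h1Lpos]
          calc |r x i - L * x i| ≤ 1/2 := habs i
            _ ≤ n * (1 - L) := by rw [h1L]; rw [mul_one_div, le_div_iff₀ h2n]; nlinarith
        rw [abs_le] at this
        exact ⟨this.1, this.2⟩
      have hrx : r x = L • x + (1 - L) • w := by
        funext i
        simp only [Pi.add_apply, Pi.smul_apply, smul_eq_mul, hwdef]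
        field_simp
        ring
      rw [hrx]
      exact hΔconv hxΔ (hcube hw) hLpos.le h1Lpos.le (by ring)
    · -- r x ∈ cube n (d-1)
      intro i
      have hint : |round (L * x i)| ≤ (d:ℤ) - 1 := by
        have : |round (L * x i)| < (d:ℤ) := by
          have := hrb i
          rw [hrdef] at this
          simp only [] at this
          exact_mod_cast (by push_cast; exact this : (|round (L * x i)| : ℝ) < (d:ℤ))
        omega
      have : |r x i| ≤ (d:ℝ) - 1 := by
        rw [hrdef]
        simp only []
        calc |((round (L * x i) : ℤ) : ℝ)| = ((|round (L * x i)| : ℤ) : ℝ) := by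
              push_cast; rfl
          _ ≤ (((d:ℤ) - 1 : ℤ) : ℝ) := by exact_mod_cast hint
          _ = (d:ℝ) - 1 := by push_cast; ring
      rw [abs_le] at this
      exact ⟨this.1, this.2⟩
  -- Z is finite
  have hZfin : Z.Finite := by
    have hsub : Z ⊆ (fun (f : Fin n → ℤ) => fun i => (f i : ℝ)) ''
        (Set.pi Set.univ fun _ => Set.Icc (-(d:ℤ)) (d:ℤ)) := by
      rintro p ⟨⟨_, hpc⟩, hpint⟩
      choose f hf using hpint
      refine ⟨f, fun i _ => ?_, by funext i; exact (hf i).symm⟩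
      rcases hpc i with ⟨h1, h2⟩
      rw [hf i] at h1 h2
      constructor
      · exact_mod_cast (by linarith : -(d:ℝ) ≤ (f i : ℝ))
      · exact_mod_cast (by linarith : (f i : ℝ) ≤ (d:ℝ))
    exact Set.Finite.subset ((Set.Finite.pi fun _ => Set.finite_Icc _ _).image _) hsub
  -- the cells
  set T : (Fin n → ℝ) → Set (Fin n → ℝ) :=
    fun p => Set.pi Set.univ fun i => Set.Ico ((p i - 1/2)/L) ((p i + 1/2)/L) with hTdef
  have hmemT : ∀ x ∈ S, x ∈ T (r x) := by
    intro x _ i _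
    have h1 : (round (L * x i) : ℝ) ≤ L * x i + 1/2 := by
      rw [round_eq]
      exact_mod_cast Int.floor_le (L * x i + 1/2)
    have h2 : L * x i + 1/2 < (round (L * x i) : ℝ) + 1 := by
      rw [round_eq]
      exact_mod_cast Int.lt_floor_add_one (L * x i + 1/2)
    constructor
    · rw [div_le_iff₀ hLpos]
      simp only [hrdef]
      nlinarith [mul_comm (x i) L]
    · rw [lt_div_iff₀ hLpos]
      simp only [hrdef]
      nlinarith [mul_comm (x i) L]
  have hScover : S ⊆ ⋃ p ∈ hZfin.toFinset, T p := by
    intro x hx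
    exact Set.mem_biUnion (hZfin.mem_toFinset.mpr (key x hx)) (hmemT x hx)
  have hvolT : ∀ p : Fin n → ℝ, volume (T p) = (ENNReal.ofReal (1/L))^n := by
    intro p
    rw [hTdef]
    simp only []
    rw [volume_pi_pi]
    have : ∀ i : Fin n, volume (Set.Ico ((p i - 1/2)/L) ((p i + 1/2)/L))
        = ENNReal.ofReal (1/L) := by
      intro i
      rw [Real.volume_Ico]
      congr 1
      ring
    simp only [this, Finset.prod_const, Finset.card_univ, Fintype.card_fin]
  have hvolS : volume S ≤ (hZfin.toFinset.card : ENNReal) * (ENNReal.ofReal (1/L))^n := by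
    calc volume S ≤ volume (⋃ p ∈ hZfin.toFinset, T p) := measure_mono hScover
      _ ≤ ∑ p ∈ hZfin.toFinset, volume (T p) := measure_biUnion_finset_le _ _
      _ = (hZfin.toFinset.card : ENNReal) * (ENNReal.ofReal (1/L))^n := by
          simp [hvolT, Finset.sum_const, nsmul_eq_mul]
  -- pass to reals
  have hRHSne : ((hZfin.toFinset.card : ENNReal) * (ENNReal.ofReal (1/L))^n) ≠ ⊤ := by
    exact ENNReal.mul_ne_top (ENNReal.natCast_ne_top _) (ENNReal.pow_ne_top ENNReal.ofReal_ne_top)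
  have hreal : (volume S).toReal ≤ (hZfin.toFinset.card : ℝ) * (1/L)^n := by
    have := ENNReal.toReal_mono hRHSne hvolS
    rwa [ENNReal.toReal_mul, ENNReal.toReal_pow, ENNReal.toReal_natCast,
      ENNReal.toReal_ofReal (by positivity)] at this
  have hcard : (Z.ncard : ℝ) = (hZfin.toFinset.card : ℝ) := by
    rw [Set.ncard_eq_toFinset_card _ hZfin]
  -- Bernoulli: L^n ≥ 1/2
  have hBern : (1:ℝ)/2 ≤ L^n := by
    have h2 : (-2:ℝ) ≤ -(1/(2*n)) := by linarith
    have := one_add_mul_le_pow h2 n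
    have heq : (1:ℝ) + n * -(1/(2*n)) = 1/2 := by field_simp; ring
    have heq2 : (1:ℝ) + -(1/(2*n)) = L := by rw [hLdef]; ring
    rw [heq, heq2] at this
    exact this
  -- finish
  have hLinv : L^n * (1/L)^n = 1 := by
    rw [← mul_pow, mul_one_div_cancel hLpos.ne', one_pow]
  have hv0 : 0 ≤ (volume S).toReal := ENNReal.toReal_nonneg
  rw [hcard]
  nlinarith [pow_pos hLpos n, mul_le_mul_of_nonneg_left hreal (pow_pos hLpos n).le,
    mul_le_mul_of_nonneg_right hBern hv0,
    Nat.cast_nonneg (α := ℝ) hZfin.toFinset.card]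
end

section
/- Let ξ = Σ_{i=1}^n ξ_i·∂/∂x_i be a vector field with ξ_i holomorphic germs at 0 ∈ ℂ^n (coordinates (x_1,…,x_n), and write t for x_1), and suppose the x_1-axis is invariant under ξ, i.e. ξ_j(t, 0,…,0) ≡ 0 for all j = 2,…,n. Let f be a holomorphic germ at 0 ∈ ℂ^n and g = ξf = Σ_i ξ_i·∂f/∂x_i. Let φ_2,…,φ_n be holomorphic germs at 0 ∈ ℂ with φ_j(0) = 0, not all identically zero, and set v = min_j ord_0 φ_j (with ord_0 of the zero germ taken to be ∞). If f(t, φ_2(t),…,φ_n(t)) ≡ 0, then ord_0 g(t, φ_2(t),…,φ_n(t)) ≥ v − 1. If moreover ξ_i(0) = 0 for every i (ξ is singular at the origin), then ord_0 g(t, φ_2(t),…,φ_n(t)) ≥ v. -/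
open Filter

section stmtAux
open Asymptotics


/-- powers compare near zero -/
lemma aux_pow_isBigO {m v : ℕ} (h : v ≤ m) :
    (fun t : ℂ => t ^ m) =O[nhds 0] (fun t : ℂ => t ^ v) := by
  obtain ⟨k, rfl⟩ := Nat.exists_eq_add_of_le h
  have h1 : (fun t : ℂ => t ^ k) =O[nhds (0 : ℂ)] (fun _ : ℂ => (1 : ℂ)) := by
    simpa using ((continuous_pow k (M := ℂ)).tendsto 0).isBigO_one (f' := fun t : ℂ => t ^ k) ℂ
  simpa [pow_add] using (isBigO_refl (fun t : ℂ => t ^ v) (nhds 0)).mul h1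

lemma aux_iteratedDeriv_eq (h : ℂ → ℂ) (p : FormalMultilinearSeries ℂ ℂ ℂ)
    (hp : HasFPowerSeriesAt h p 0) (k : ℕ) :
    iteratedDeriv k h 0 = k.factorial • p.coeff k := by
  obtain ⟨r, hr⟩ := hp
  rw [iteratedDeriv_eq_iteratedFDeriv, ← hr.factorial_smul 1 k]
  rfl

/-- A: vanishing derivatives imply big-O -/
lemma aux_A {h : ℂ → ℂ} (hh : AnalyticAt ℂ h 0) {v : ℕ}
    (hd : ∀ k < v, iteratedDeriv k h 0 = 0) :
    h =O[nhds 0] fun t => t ^ v := by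
  obtain ⟨p, hp⟩ := hh
  by_cases hz : ∀ᶠ t in nhds (0 : ℂ), h t = 0
  · have h0 : h =ᶠ[nhds (0 : ℂ)] (fun _ => (0 : ℂ)) := hz
    exact h0.trans_isBigO (isBigO_zero (fun t : ℂ => t ^ v) (nhds 0))
  · have hp0 : p ≠ 0 := fun h0 => hz (hp.locally_zero_iff.mpr h0)
    have hord : v ≤ p.order := by
      by_contra hlt
      push_neg at hlt
      have h1 := hd p.order hlt
      rw [aux_iteratedDeriv_eq h p hp] at h1
      have h2 : p.coeff p.order = 0 := by
        have : (p.order.factorial : ℂ) ≠ 0 := Nat.cast_ne_zero.mpr (Nat.factorial_ne_zero _)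
        simpa [nsmul_eq_mul, this] using h1
      exact p.apply_order_ne_zero hp0 (FormalMultilinearSeries.coeff_eq_zero.mp h2)
    set G := (Function.swap dslope 0)^[p.order] h with hG
    have hGa : AnalyticAt ℂ G 0 := ⟨_, hp.has_fpower_series_iterate_dslope_fslope p.order⟩
    have hG1 : G =O[nhds (0 : ℂ)] (fun _ => (1 : ℂ)) := hGa.continuousAt.isBigO_one ℂ
    have heq : h =ᶠ[nhds 0] fun z => z ^ p.order * G z := by
      filter_upwards [Eventually.of_forall hp.eq_pow_order_mul_iterate_dslope] with z hz
      simpa [smul_eq_mul] using hz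
    have hO : h =O[nhds 0] fun t => t ^ p.order := by
      refine heq.trans_isBigO ?_
      simpa using (isBigO_refl (fun t : ℂ => t ^ p.order) (nhds 0)).mul hG1
    exact hO.trans (aux_pow_isBigO hord)

/-- B: big-O implies vanishing derivatives -/
lemma aux_B {h : ℂ → ℂ} (hh : AnalyticAt ℂ h 0) {v : ℕ}
    (hO : h =O[nhds 0] fun t => t ^ v) :
    ∀ k < v, iteratedDeriv k h 0 = 0 := by
  obtain ⟨p, hp⟩ := hh
  intro k hk
  rw [aux_iteratedDeriv_eq h p hp]
  suffices hc : p.coeff k = 0 by simp [hc]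
  by_cases hp0 : p = 0
  · simp [hp0, FormalMultilinearSeries.coeff]
  · suffices hvo : v ≤ p.order by
      exact FormalMultilinearSeries.coeff_eq_zero.mpr
        (p.apply_eq_zero_of_lt_order (lt_of_lt_of_le hk hvo))
    by_contra hlt
    push_neg at hlt
    set G := (Function.swap dslope 0)^[p.order] h with hG
    have hGa : AnalyticAt ℂ G 0 := ⟨_, hp.has_fpower_series_iterate_dslope_fslope p.order⟩
    have hGne : G 0 ≠ 0 := hp.iterate_dslope_fslope_ne_zero hp0
    have heq := Eventually.of_forall (f := nhds (0:ℂ)) hp.eq_pow_order_mul_iterate_dslope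
    obtain ⟨C, hC⟩ := hO.bound
    have hb : ∀ᶠ z in nhdsWithin (0 : ℂ) {(0 : ℂ)}ᶜ,
        ‖G z‖ ≤ C * ‖z‖ ^ (v - p.order) := by
      have h1 : ∀ᶠ z in nhdsWithin (0 : ℂ) {(0 : ℂ)}ᶜ,
          ‖h z‖ ≤ C * ‖z‖ ^ v ∧ h z = (z - 0) ^ p.order • G z :=
        ((hC.and heq).filter_mono nhdsWithin_le_nhds).mono (by
          intro z hz
          refine ⟨?_, hz.2⟩
          simpa [norm_pow] using hz.1)
      filter_upwards [h1, self_mem_nhdsWithin] with z hz hz0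
      have hz0' : z ≠ 0 := hz0
      have hnz : (0 : ℝ) < ‖z‖ ^ p.order := pow_pos (norm_pos_iff.mpr hz0') _
      have h2 : ‖z‖ ^ p.order * ‖G z‖ ≤ C * (‖z‖ ^ p.order * ‖z‖ ^ (v - p.order)) := by
        have hsp : ‖z‖ ^ p.order * ‖z‖ ^ (v - p.order) = ‖z‖ ^ v := by
          rw [← pow_add]
          congr 1
          omega
        rw [hsp]
        calc ‖z‖ ^ p.order * ‖G z‖ = ‖h z‖ := by
              rw [hz.2]; simp [norm_smul, norm_pow]
          _ ≤ C * ‖z‖ ^ v := hz.1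
      nlinarith [hnz, norm_nonneg (G z), pow_nonneg (norm_nonneg z) (v - p.order)]
    have htend : Filter.Tendsto G (nhdsWithin (0 : ℂ) {(0 : ℂ)}ᶜ) (nhds 0) := by
      apply squeeze_zero_norm' hb
      have hm : v - p.order ≠ 0 := by omega
      have : Filter.Tendsto (fun z : ℂ => C * ‖z‖ ^ (v - p.order)) (nhds 0) (nhds 0) := by
        have := ((continuous_norm.tendsto (0 : ℂ)).pow (v - p.order)).const_mul C
        simpa [hm] using this
      exact this.mono_left nhdsWithin_le_nhds
    have : G 0 = 0 :=
      tendsto_nhds_unique (hGa.continuousAt.continuousWithinAt (s := {(0 : ℂ)}ᶜ)) htend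
    exact hGne this


lemma aux_clm_pi_apply {m : ℕ} (L : (Fin m → ℂ) →L[ℂ] ℂ) (w : Fin m → ℂ) :
    L w = ∑ i, w i * L (Pi.single i 1) := by
  have hw : w = ∑ i, w i • (Pi.single i (1 : ℂ) : Fin m → ℂ) := by
    funext j
    simp [Pi.single_apply, Finset.sum_apply]
  conv_lhs => rw [hw]
  rw [map_sum]
  simp [smul_eq_mul]




end stmtAux

open Asymptotics in

/-- Rolle-type order comparison for a vector field along an invariant axis:
if the `x_1`-axis (coordinate `t = x_1`) is `ξ`-invariant, `f(t,φ(t)) ≡ 0` and `g = ξf`, then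
`ord_0 g(t,φ(t)) ≥ v - 1` where `v = min_j ord_0 φ_j`; if moreover `ξ` is singular at the
origin then `ord_0 g(t,φ(t)) ≥ v`.  (Order at least `v` is expressed by the vanishing at `0` of
all derivatives of order `< v`, which also handles the convention `ord 0 = ∞`.) -/
theorem stmt_12 (n : ℕ)
    (ξ : Fin (n + 1) → (Fin (n + 1) → ℂ) → ℂ)
    (hξ : ∀ i, AnalyticAt ℂ (ξ i) 0)
    (hinv : ∀ᶠ t in nhds (0 : ℂ), ∀ j : Fin n,
      ξ j.succ (Fin.cons t (0 : Fin n → ℂ)) = 0)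
    (f g : (Fin (n + 1) → ℂ) → ℂ)
    (hf : AnalyticAt ℂ f 0)
    (hg : ∀ᶠ x in nhds (0 : Fin (n + 1) → ℂ),
      g x = ∑ i, ξ i x * fderiv ℂ f x (Pi.single i 1))
    (φ : Fin n → ℂ → ℂ)
    (hφa : ∀ j, AnalyticAt ℂ (φ j) 0)
    (hφ0 : ∀ j, φ j 0 = 0)
    (hne : ¬ ∀ j, ∀ᶠ t in nhds (0 : ℂ), φ j t = 0)
    (hzero : ∀ᶠ t in nhds (0 : ℂ), f (Fin.cons t fun j => φ j t) = 0)
    (v : ℕ)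
    (hv : ∀ j, ∀ k < v, iteratedDeriv k (φ j) 0 = 0) :
    (∀ k, k + 1 < v →
      iteratedDeriv k (fun t => g (Fin.cons t fun j => φ j t)) 0 = 0) ∧
    ((∀ i, ξ i 0 = 0) →
      ∀ k < v, iteratedDeriv k (fun t => g (Fin.cons t fun j => φ j t)) 0 = 0) := by
  classical
  set ψ : ℂ → (Fin (n + 1) → ℂ) := fun t => Fin.cons t fun j => φ j t with hψdef
  have hψ0 : ψ 0 = 0 := by
    funext i
    refine Fin.cases ?_ ?_ i <;> simp [hψdef, hφ0]
  -- analyticity of ψ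
  have hψa : AnalyticAt ℂ ψ 0 := by
    have : ∀ i : Fin (n + 1), AnalyticAt ℂ (fun t : ℂ => ψ t i) 0 := by
      intro i
      refine Fin.cases ?_ ?_ i
      · simp [hψdef]; exact analyticAt_id
      · intro j
        simpa [hψdef] using hφa j
    exact AnalyticAt.pi this
  have hψc : Filter.Tendsto ψ (nhds 0) (nhds 0) := by
    have := hψa.continuousAt.tendsto
    rwa [hψ0] at this
  -- the partial derivative functions along the curve
  set D : Fin (n + 1) → ℂ → ℂ := fun i t => fderiv ℂ f (ψ t) (Pi.single i 1) with hDdef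
  have hfdψ : AnalyticAt ℂ (fun t => fderiv ℂ f (ψ t)) 0 := by
    have h1 : AnalyticAt ℂ (fderiv ℂ f) (ψ 0) := by rw [hψ0]; exact hf.fderiv
    exact h1.comp hψa
  have hDa : ∀ i, AnalyticAt ℂ (D i) 0 := by
    intro i
    exact ((ContinuousLinearMap.apply ℂ ℂ (Pi.single i 1)).analyticAt _).comp hfdψ
  have hDO : ∀ i, (D i) =O[nhds (0:ℂ)] (fun _ => (1:ℂ)) := fun i =>
    (hDa i).continuousAt.isBigO_one ℂ
  have hξψa : ∀ i, AnalyticAt ℂ (fun t => ξ i (ψ t)) 0 := by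
    intro i
    have h1 : AnalyticAt ℂ (ξ i) (ψ 0) := by rw [hψ0]; exact hξ i
    exact h1.comp hψa
  have hφ'a : ∀ j, AnalyticAt ℂ (deriv (φ j)) 0 := by
    intro j
    exact ((ContinuousLinearMap.apply ℂ ℂ (1:ℂ)).analyticAt _).comp (hφa j).fderiv
  -- the key pointwise identity
  have key : ∀ᶠ t in nhds (0 : ℂ), g (ψ t) =
      ∑ j : Fin n, (ξ (Fin.succ j) (ψ t) - ξ 0 (ψ t) * deriv (φ j) t) * D (Fin.succ j) t := by
    have E2 : ∀ᶠ t in nhds (0 : ℂ), ∀ᶠ s in nhds t, f (ψ s) = 0 := hzero.eventually_nhds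
    have E3 : ∀ᶠ t in nhds (0 : ℂ),
        g (ψ t) = ∑ i, ξ i (ψ t) * fderiv ℂ f (ψ t) (Pi.single i 1) := hψc.eventually hg
    have E4 : ∀ᶠ t in nhds (0 : ℂ), ∀ j, AnalyticAt ℂ (φ j) t :=
      eventually_all.mpr fun j => (hφa j).eventually_analyticAt
    have E5 : ∀ᶠ t in nhds (0 : ℂ), AnalyticAt ℂ f (ψ t) := by
      have h6 := hf.eventually_analyticAt
      exact hψc.eventually h6
    filter_upwards [E2, E3, E4, E5] with t h2 h3 h4 h5
    set w : Fin (n + 1) → ℂ := Fin.cons 1 fun j => deriv (φ j) t with hwdef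
    have hψd : HasDerivAt ψ w t := by
      rw [hasDerivAt_pi]
      intro i
      refine Fin.cases ?_ ?_ i
      · have : HasDerivAt (fun s : ℂ => s) 1 t := hasDerivAt_id t
        refine (this.congr_of_eventuallyEq ?_)
        · exact Eventually.of_forall fun s => by simp [hψdef]
      · intro j
        have : HasDerivAt (φ j) (deriv (φ j) t) t := (h4 j).differentiableAt.hasDerivAt
        refine this.congr_of_eventuallyEq ?_ |>.congr_deriv ?_
        · exact Eventually.of_forall fun s => by simp [hψdef]
        · simp [hwdef]
    have hcomp : HasDerivAt (fun s => f (ψ s)) (fderiv ℂ f (ψ t) w) t :=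
      (h5.differentiableAt.hasFDerivAt).comp_hasDerivAt t hψd
    have hzero' : HasDerivAt (fun s => f (ψ s)) 0 t := by
      have h0 : (fun s => f (ψ s)) =ᶠ[nhds t] fun _ => (0 : ℂ) := h2
      exact (hasDerivAt_const t (0:ℂ)).congr_of_eventuallyEq h0
    have hw0 : fderiv ℂ f (ψ t) w = 0 := hcomp.unique hzero'
    rw [aux_clm_pi_apply] at hw0
    rw [Fin.sum_univ_succ] at hw0
    have hD0 : D 0 t = -∑ j : Fin n, deriv (φ j) t * D (Fin.succ j) t := by
      have := hw0
      simp only [hwdef, Fin.cons_zero, Fin.cons_succ, one_mul, hDdef] at this ⊢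
      linear_combination this
    rw [h3, Fin.sum_univ_succ]
    have hrw : ∀ i, fderiv ℂ f (ψ t) (Pi.single i 1) = D i t := fun i => rfl
    simp only [hrw]
    rw [hD0]
    simp only [sub_mul, Finset.sum_sub_distrib, mul_neg, Finset.mul_sum, mul_assoc]
    ring
  have hkey : (fun t => g (ψ t)) =ᶠ[nhds (0:ℂ)]
      (fun t => ∑ j : Fin n,
        (ξ (Fin.succ j) (ψ t) - ξ 0 (ψ t) * deriv (φ j) t) * D (Fin.succ j) t) := key
  have hSa : AnalyticAt ℂ (fun t => ∑ j : Fin n,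
      (ξ (Fin.succ j) (ψ t) - ξ 0 (ψ t) * deriv (φ j) t) * D (Fin.succ j) t) 0 := by
    apply Finset.analyticAt_fun_sum
    intro j _
    exact ((hξψa j.succ).sub ((hξψa 0).mul (hφ'a j))).mul (hDa j.succ)
  have hga : AnalyticAt ℂ (fun t => g (ψ t)) 0 := hSa.congr hkey.symm
  have hφO : ∀ j, (φ j) =O[nhds (0:ℂ)] fun t => t ^ v := fun j => aux_A (hφa j) (hv j)
  have hΔ : (fun t => ψ t - (Fin.cons t (0 : Fin n → ℂ) : Fin (n+1) → ℂ)) =O[nhds (0:ℂ)]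
      (fun t => t ^ v) := by
    rw [isBigO_pi]
    intro i
    refine Fin.cases ?_ ?_ i
    · have he : (fun t : ℂ => (ψ t - (Fin.cons t (0 : Fin n → ℂ) : Fin (n+1) → ℂ)) 0) = fun _ => (0:ℂ) := by
        funext t; simp [hψdef]
      rw [he]; exact isBigO_zero _ _
    · intro j
      have he : (fun t : ℂ => (ψ t - (Fin.cons t (0 : Fin n → ℂ) : Fin (n+1) → ℂ)) j.succ) = φ j := by
        funext t; simp [hψdef]
      rw [he]; exact hφO j
  have hc0 : (Fin.cons (0:ℂ) (0 : Fin n → ℂ) : Fin (n+1) → ℂ) = (0 : Fin (n+1) → ℂ) := by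
    funext i; refine Fin.cases ?_ ?_ i <;> simp
  have hconsc : Filter.Tendsto (fun t : ℂ => (Fin.cons t (0 : Fin n → ℂ) : Fin (n+1) → ℂ)) (nhds 0)
      (nhds 0) := by
    have hcont : Continuous (fun t : ℂ => (Fin.cons t (0 : Fin n → ℂ) : Fin (n+1) → ℂ)) := by
      apply continuous_pi
      intro i
      refine Fin.cases ?_ ?_ i
      · simp; exact continuous_id
      · intro j; simpa using (continuous_const (y := (0:ℂ)))
    have h7 := hcont.tendsto 0
    rwa [hc0] at h7
  have hξsO : ∀ j : Fin n, (fun t => ξ (Fin.succ j) (ψ t)) =O[nhds (0:ℂ)]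
      (fun t => t ^ v) := by
    intro j
    obtain ⟨K, s, hs, hlip⟩ := (hξ j.succ).contDiffAt.exists_lipschitzOnWith (𝕂 := ℂ)
    have hmem1 : ∀ᶠ t in nhds (0:ℂ), ψ t ∈ s := hψc.eventually_mem hs
    have hmem2 : ∀ᶠ t in nhds (0:ℂ), (Fin.cons t (0 : Fin n → ℂ) : Fin (n+1) → ℂ) ∈ s :=
      hconsc.eventually_mem hs
    have hb : ∀ᶠ t in nhds (0:ℂ),
        ‖ξ (Fin.succ j) (ψ t)‖ ≤ K * ‖ψ t - (Fin.cons t (0 : Fin n → ℂ) : Fin (n+1) → ℂ)‖ := by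
      filter_upwards [hmem1, hmem2, hinv] with t h1 h2 h3
      have hd := hlip.dist_le_mul _ h1 _ h2
      rw [dist_eq_norm, dist_eq_norm] at hd
      simpa [h3 j] using hd
    exact (isBigO_iff.mpr ⟨K, by simpa using hb⟩).trans hΔ
  have hξ0O1 : (fun t => ξ 0 (ψ t)) =O[nhds (0:ℂ)] (fun _ => (1:ℂ)) :=
    (hξψa 0).continuousAt.isBigO_one ℂ
  have hφ'O : ∀ j, (deriv (φ j)) =O[nhds (0:ℂ)] fun t => t ^ (v - 1) := by
    intro j
    apply aux_A (hφ'a j)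
    intro k hk
    rw [← iteratedDeriv_succ']
    exact hv j (k+1) (by omega)
  constructor
  · intro k hk
    have h1 : (fun t => g (ψ t)) =O[nhds (0:ℂ)] fun t => t ^ (v - 1) := by
      refine hkey.trans_isBigO ?_
      apply IsBigO.fun_sum
      intro j _
      have ha : (fun t => ξ (Fin.succ j) (ψ t)) =O[nhds (0:ℂ)] fun t => t ^ (v-1) :=
        (hξsO j).trans (aux_pow_isBigO (Nat.sub_le v 1))
      have hb : (fun t => ξ 0 (ψ t) * deriv (φ j) t) =O[nhds (0:ℂ)]
          (fun t => t ^ (v-1)) := by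
        simpa using hξ0O1.mul (hφ'O j)
      have hc := (ha.sub hb).mul (hDO (Fin.succ j))
      simpa using hc
    exact aux_B hga h1 k (by omega)
  · intro hsing k hk
    have hξ0Ot : (fun t => ξ 0 (ψ t)) =O[nhds (0:ℂ)] fun t : ℂ => t ^ 1 := by
      apply aux_A (hξψa 0)
      intro m hm
      have hm0 : m = 0 := by omega
      subst hm0
      simpa [iteratedDeriv_zero, hψ0] using hsing 0
    have h1 : (fun t => g (ψ t)) =O[nhds (0:ℂ)] fun t => t ^ v := by
      refine hkey.trans_isBigO ?_
      apply IsBigO.fun_sum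
      intro j _
      have hb : (fun t => ξ 0 (ψ t) * deriv (φ j) t) =O[nhds (0:ℂ)]
          (fun t => t ^ v) := by
        have h8 := hξ0Ot.mul (hφ'O j)
        have heq : (fun t : ℂ => t ^ 1 * t ^ (v-1)) = fun t => t ^ v := by
          funext t; rw [← pow_add]; congr 1; omega
        rwa [heq] at h8
      have hc := ((hξsO j).sub hb).mul (hDO (Fin.succ j))
      simpa using hc
    exact aux_B hga h1 k hk
end

section
/- Let f be a holomorphic germ at 0 ∈ ℂ^n, with coordinates written as (t, x_2,…,x_n), and let φ_2,…,φ_n be holomorphic germs at 0 ∈ ℂ with φ_j(0) = 0. Suppose f(t, φ_2(t),…,φ_n(t)) ≡ 0 while f(t, 0,…,0) is not identically zero, and set δ = ord_0 f(t, 0,…,0). Then min_{j=2,…,n} ord_0 φ_j ≤ δ. -/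
open Filter

/-- The order of vanishing of `g` at `p`: the least `k` such that the `k`-th derivative of `g`
at `p` is nonzero (with junk value `0`, via `sInf`, if `g` vanishes identically near `p`). -/
noncomputable def ordAt (g : ℂ → ℂ) (p : ℂ) : ℕ :=
  sInf {k | iteratedDeriv k g p ≠ 0}

lemma iteratedDeriv_eq_factorial_smul_coeff {g : ℂ → ℂ} {p : FormalMultilinearSeries ℂ ℂ ℂ}
    (hp : HasFPowerSeriesAt g p 0) (k : ℕ) :
    iteratedDeriv k g 0 = Nat.factorial k • p.coeff k := by
  obtain ⟨r, hr⟩ := hp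
  rw [iteratedDeriv_eq_iteratedFDeriv, ← hr.factorial_smul 1 k]
  rfl

lemma eq_pow_smul_iterate_dslope (m : ℕ) :
    ∀ f : ℂ → ℂ, (∀ i < m, (Function.swap dslope 0)^[i] f 0 = 0) →
      ∀ z, f z = z ^ m • (Function.swap dslope 0)^[m] f z := by
  induction m with
  | zero => intro f _ z; simp
  | succ m ih =>
    intro f hf z
    have h1 : f z = z ^ m • (Function.swap dslope 0)^[m] f z :=
      ih f (fun i hi => hf i (hi.trans (Nat.lt_succ_self m))) z
    set F := (Function.swap dslope 0)^[m] f with hF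
    have hF0 : F 0 = 0 := hf m (Nat.lt_succ_self m)
    have h2 : F z = z • dslope F 0 z := by
      have h3 := sub_smul_dslope F 0 z
      rw [hF0, sub_zero, sub_zero] at h3
      exact h3.symm
    rw [h1, h2, Function.iterate_succ', Function.comp_apply]
    rw [smul_smul, pow_succ]

lemma bound_of_derivs_zero {φ : ℂ → ℂ} (hφ : AnalyticAt ℂ φ 0) (N : ℕ)
    (h : ∀ k ≤ N, iteratedDeriv k φ 0 = 0) :
    ∃ C : ℝ, 0 ≤ C ∧ ∀ᶠ z in nhds (0:ℂ), ‖φ z‖ ≤ C * ‖z‖ ^ (N + 1) := by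
  obtain ⟨q, hq⟩ := hφ
  have hcoeff : ∀ k ≤ N, q.coeff k = 0 := by
    intro k hk
    have h1 := iteratedDeriv_eq_factorial_smul_coeff hq k
    rw [h k hk] at h1
    have h2 : (Nat.factorial k : ℂ) * q.coeff k = 0 := by
      simpa [nsmul_eq_mul] using h1.symm
    rcases mul_eq_zero.mp h2 with h3 | h3
    · exact absurd h3 (by exact_mod_cast k.factorial_ne_zero)
    · exact h3
  set w := (Function.swap dslope 0)^[N+1] φ with hw_def
  have hw : HasFPowerSeriesAt w (FormalMultilinearSeries.fslope^[N+1] q) 0 :=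
    hq.has_fpower_series_iterate_dslope_fslope (N+1)
  have hvan : ∀ i < N + 1, (Function.swap dslope 0)^[i] φ 0 = 0 := by
    intro i hi
    have h1 : (FormalMultilinearSeries.fslope^[i] q) 0 1 = (Function.swap dslope 0)^[i] φ 0 :=
      (hq.has_fpower_series_iterate_dslope_fslope i).coeff_zero 1
    have h2 : (FormalMultilinearSeries.fslope^[i] q).coeff 0 = q.coeff i := by
      rw [FormalMultilinearSeries.coeff_iterate_fslope]; simp
    rw [← h1]
    rw [show (FormalMultilinearSeries.fslope^[i] q) 0 1
        = (FormalMultilinearSeries.fslope^[i] q).coeff 0 from rfl, h2]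
    exact hcoeff i (Nat.lt_succ_iff.mp hi)
  have heq : ∀ z, φ z = z ^ (N+1) • w z := eq_pow_smul_iterate_dslope (N+1) φ hvan
  refine ⟨‖w 0‖ + 1, by positivity, ?_⟩
  have hc : ContinuousAt w 0 := hw.analyticAt.continuousAt
  have hnorm : Filter.Tendsto (fun z => ‖w z‖) (nhds (0:ℂ)) (nhds ‖w 0‖) :=
    (continuous_norm.continuousAt.comp hc)
  have hev : ∀ᶠ z in nhds (0:ℂ), ‖w z‖ < ‖w 0‖ + 1 :=
    hnorm.eventually_lt_const (by linarith)
  filter_upwards [hev] with z hz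
  rw [heq z, norm_smul, norm_pow]
  have h0 : (0:ℝ) ≤ ‖z‖ ^ (N+1) := by positivity
  calc ‖z‖ ^ (N+1) * ‖w z‖ ≤ ‖z‖ ^ (N+1) * (‖w 0‖ + 1) :=
        mul_le_mul_of_nonneg_left hz.le h0
    _ = (‖w 0‖ + 1) * ‖z‖ ^ (N+1) := mul_comm _ _

/-- If `f(t,φ_2(t),…,φ_n(t)) ≡ 0` while `f(t,0,…,0) ≢ 0` has order `δ` at `0`, then
`min_j ord_0 φ_j ≤ δ`. -/
theorem stmt_13 (n : ℕ)
    (f : (Fin (n + 1) → ℂ) → ℂ) (hf : AnalyticAt ℂ f 0)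
    (φ : Fin n → ℂ → ℂ)
    (hφa : ∀ j, AnalyticAt ℂ (φ j) 0)
    (hφ0 : ∀ j, φ j 0 = 0)
    (hzero : ∀ᶠ t in nhds (0 : ℂ), f (Fin.cons t fun j => φ j t) = 0)
    (hne : ¬ ∀ᶠ t in nhds (0 : ℂ), f (Fin.cons t (0 : Fin n → ℂ)) = 0) :
    ∃ j : Fin n, ∃ k ≤ ordAt (fun t => f (Fin.cons t (0 : Fin n → ℂ))) 0,
      iteratedDeriv k (φ j) 0 ≠ 0 := by
  by_contra hcon
  push_neg at hcon
  set g : ℂ → ℂ := fun t => f (Fin.cons t (0 : Fin n → ℂ)) with hg_def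
  -- the zero vector is `Fin.cons 0 0`
  have h00 : (0 : Fin (n+1) → ℂ) = Fin.cons (0:ℂ) (0 : Fin n → ℂ) := by
    funext i; refine Fin.cases ?_ ?_ i <;> simp
  -- `g` is analytic at 0
  have hL : AnalyticAt ℂ g 0 := by
    let L : ℂ →L[ℂ] (Fin (n+1) → ℂ) :=
      ContinuousLinearMap.pi (fun i => Fin.cases (ContinuousLinearMap.id ℂ ℂ) (fun _ => 0) i)
    have hLt : ∀ t, L t = Fin.cons t (0 : Fin n → ℂ) := by
      intro t; funext i
      refine Fin.cases ?_ ?_ i <;>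
        simp [L, ContinuousLinearMap.pi_apply]
    have hfa : AnalyticAt ℂ f (L 0) := by rw [hLt 0, ← h00]; exact hf
    have hcomp : AnalyticAt ℂ (f ∘ L) 0 := hfa.comp (L.analyticAt 0)
    have : g = f ∘ L := by funext t; simp [hg_def, Function.comp, hLt]
    rw [this]; exact hcomp
  obtain ⟨p, hp⟩ := hL
  have hpne : p ≠ 0 := fun h0 => hne (hp.locally_zero_iff.mpr h0)
  set D := p.order with hD_def
  set u := (Function.swap dslope 0)^[D] g with hu_def
  have hgfac : ∀ᶠ z in nhds (0:ℂ), g z = z ^ D • u z := by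
    filter_upwards [Filter.Eventually.of_forall hp.eq_pow_order_mul_iterate_dslope] with z hz
    simpa using hz
  have hu0 : u 0 ≠ 0 := hp.iterate_dslope_fslope_ne_zero hpne
  have hucont : ContinuousAt u 0 :=
    (hp.has_fpower_series_iterate_dslope_fslope D).analyticAt.continuousAt
  -- D ≤ ordAt g 0
  have hDmem : iteratedDeriv D g 0 ≠ 0 := by
    rw [iteratedDeriv_eq_factorial_smul_coeff hp D]
    have h1 : p.coeff D ≠ 0 := by
      rw [ne_eq, FormalMultilinearSeries.coeff_eq_zero]
      exact p.apply_order_ne_zero hpne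
    simp [smul_eq_zero, h1, Nat.factorial_ne_zero]
  have hDle : D ≤ ordAt g 0 := by
    by_contra hlt
    push_neg at hlt
    have hmem : ordAt g 0 ∈ {k | iteratedDeriv k g 0 ≠ 0} := Nat.sInf_mem ⟨D, hDmem⟩
    apply hmem
    rw [iteratedDeriv_eq_factorial_smul_coeff hp]
    have : p.coeff (ordAt g 0) = 0 := by
      rw [FormalMultilinearSeries.coeff_eq_zero]
      exact p.apply_eq_zero_of_lt_order hlt
    simp [this]
  -- bound each φ j
  have hbound : ∀ j : Fin n, ∃ C : ℝ, 0 ≤ C ∧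
      ∀ᶠ z in nhds (0:ℂ), ‖φ j z‖ ≤ C * ‖z‖ ^ (D + 1) := by
    intro j
    refine bound_of_derivs_zero (hφa j) D fun k hk => hcon j k (hk.trans hDle)
  choose C hC0 hCb using hbound
  set M : ℝ := ∑ j : Fin n, C j with hM_def
  have hM0 : 0 ≤ M := Finset.sum_nonneg fun j _ => hC0 j
  have hMj : ∀ j, C j ≤ M :=
    fun j => Finset.single_le_sum (fun i _ => hC0 i) (Finset.mem_univ j)
  -- Lipschitz bound for f near 0
  obtain ⟨K, t, ht, hK⟩ := (hf.contDiffAt (n := 1)).exists_lipschitzOnWith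
  -- the two curves tend to 0
  have hA : ContinuousAt (fun z : ℂ => Fin.cons z (fun j => φ j z) : ℂ → Fin (n+1) → ℂ) 0 := by
    rw [continuousAt_pi]
    intro i
    refine Fin.cases ?_ ?_ i
    · simpa using continuousAt_id' (0:ℂ)
    · intro j; simpa using (hφa j).continuousAt
  have hA0 : Fin.cons (0:ℂ) (fun j => φ j 0) = (0 : Fin (n+1) → ℂ) := by
    funext i; refine Fin.cases ?_ ?_ i <;> simp [hφ0]
  have hAmem : ∀ᶠ z in nhds (0:ℂ), Fin.cons z (fun j => φ j z) ∈ t := by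
    have := hA.tendsto
    rw [hA0] at this
    exact this.eventually_mem ht
  have hB : ContinuousAt (fun z : ℂ => Fin.cons z (0 : Fin n → ℂ) : ℂ → Fin (n+1) → ℂ) 0 := by
    rw [continuousAt_pi]
    intro i
    refine Fin.cases ?_ ?_ i
    · simpa using continuousAt_id' (0:ℂ)
    · intro j; simpa using continuousAt_const
  have hBmem : ∀ᶠ z in nhds (0:ℂ), Fin.cons z (0 : Fin n → ℂ) ∈ t := by
    have := hB.tendsto
    rw [← h00] at this
    exact this.eventually_mem ht
  -- eventually ‖u z‖ > ‖u 0‖ / 2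
  have hupos : (0:ℝ) < ‖u 0‖ := norm_pos_iff.mpr hu0
  have hular : ∀ᶠ z in nhds (0:ℂ), ‖u 0‖ / 2 < ‖u z‖ := by
    have hn : Filter.Tendsto (fun z => ‖u z‖) (nhds (0:ℂ)) (nhds ‖u 0‖) :=
      (hucont.norm : ContinuousAt (fun z => ‖u z‖) 0)
    exact hn.eventually_const_lt (by linarith)
  -- eventually ‖z‖ < ε
  set ε : ℝ := (‖u 0‖ / 2) / ((K : ℝ) * M + 1) with hε_def
  have hεpos : 0 < ε := by
    apply div_pos (by linarith)
    have : (0:ℝ) ≤ (K:ℝ) * M := mul_nonneg K.2 hM0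
    linarith
  have hsmall : ∀ᶠ z in nhds (0:ℂ), ‖z‖ < ε := by
    filter_upwards [Metric.ball_mem_nhds (0:ℂ) hεpos] with z hz
    simpa [dist_zero_right] using hz
  have hφall : ∀ᶠ z in nhds (0:ℂ), ∀ j, ‖φ j z‖ ≤ M * ‖z‖ ^ (D + 1) := by
    rw [eventually_all]
    intro j
    filter_upwards [hCb j] with z hz
    exact hz.trans (mul_le_mul_of_nonneg_right (hMj j) (by positivity))
  -- pick a point z ≠ 0 where all eventual conditions hold
  have hall : ∀ᶠ z in nhds (0:ℂ), (f (Fin.cons z fun j => φ j z) = 0) ∧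
      g z = z ^ D • u z ∧ Fin.cons z (fun j => φ j z) ∈ t ∧
      Fin.cons z (0 : Fin n → ℂ) ∈ t ∧ ‖u 0‖ / 2 < ‖u z‖ ∧ ‖z‖ < ε ∧
      ∀ j, ‖φ j z‖ ≤ M * ‖z‖ ^ (D + 1) := by
    filter_upwards [hzero, hgfac, hAmem, hBmem, hular, hsmall, hφall] with z h1 h2 h3 h4 h5 h6 h7
    exact ⟨h1, h2, h3, h4, h5, h6, h7⟩
  obtain ⟨z, ⟨h1, h2, h3, h4, h5, h6, h7⟩, hzne⟩ :=
    (Filter.Eventually.and (eventually_nhdsWithin_of_eventually_nhds hall)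
      (eventually_mem_nhdsWithin (s := {(0:ℂ)}ᶜ))).exists
  replace hzne : z ≠ 0 := hzne
  -- main estimate
  have hd : dist (Fin.cons z (0 : Fin n → ℂ) : Fin (n+1) → ℂ)
      ((Fin.cons z fun j => φ j z : Fin (n+1) → ℂ)) ≤ M * ‖z‖ ^ (D + 1) := by
    rw [dist_pi_le_iff (by positivity)]
    intro i
    induction i using Fin.cases with
    | zero => simp; positivity
    | succ j =>
      have he : dist ((Fin.cons z (0 : Fin n → ℂ) : Fin (n+1) → ℂ) j.succ)
          ((Fin.cons z fun j => φ j z : Fin (n+1) → ℂ) j.succ) = ‖φ j z‖ := by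
        simp [Fin.cons_succ, dist_eq_norm]
      rw [he]
      exact h7 j
  have hlip : ‖g z‖ ≤ (K:ℝ) * (M * ‖z‖ ^ (D + 1)) := by
    have h8 := hK.dist_le_mul _ h4 _ h3
    rw [h1, dist_zero_right] at h8
    exact h8.trans (mul_le_mul_of_nonneg_left hd K.2)
  have hzpos : (0:ℝ) < ‖z‖ := norm_pos_iff.mpr hzne
  have hgz : ‖g z‖ = ‖z‖ ^ D * ‖u z‖ := by rw [h2, norm_smul, norm_pow]
  have hfin : ‖u z‖ ≤ (K:ℝ) * M * ‖z‖ := by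
    have hpow : (0:ℝ) < ‖z‖ ^ D := by positivity
    have h9 : ‖u z‖ * ‖z‖ ^ D ≤ ((K:ℝ) * M * ‖z‖) * ‖z‖ ^ D := by
      have h10 := hlip
      rw [hgz, pow_succ] at h10
      linear_combination h10
    exact le_of_mul_le_mul_right h9 hpow
  -- contradiction
  have : ‖u 0‖ / 2 < ‖u 0‖ / 2 := by
    calc ‖u 0‖ / 2 < ‖u z‖ := h5
      _ ≤ (K:ℝ) * M * ‖z‖ := hfin
      _ ≤ ((K:ℝ) * M + 1) * ‖z‖ := by nlinarith [hzpos]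
      _ < ((K:ℝ) * M + 1) * ε := by
          apply mul_lt_mul_of_pos_left h6
          have : (0:ℝ) ≤ (K:ℝ) * M := mul_nonneg K.2 hM0
          linarith
      _ = ‖u 0‖ / 2 := by
          rw [hε_def]; field_simp
  exact absurd this (lt_irrefl _)
end

section
/- Let u : D → ℂ^n be a holomorphic map on an open disc D ⊆ ℂ around 0 and let d ≥ 1 be an integer. Then there exists a nonzero polynomial P ∈ ℂ[x_1,…,x_n] with deg P ≤ d such that either P∘u is identically zero, or the order of vanishing of P∘u at t = 0 is at least C(n+d, n) − 1, where C(n+d, n) is the binomial coefficient (equal to the dimension of the space of polynomials of degree at most d in n variables). -/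
open MvPolynomial

/-- For any holomorphic map `u : D → ℂ^n` on a disc around `0` and any `d ≥ 1` there is a
nonzero polynomial `P` of degree at most `d` such that `P∘u` either vanishes identically or
vanishes at `t = 0` to order at least `C(n+d,n) - 1`. -/
theorem stmt_17 (n : ℕ) (r : ℝ) (hr : 0 < r) (u : ℂ → Fin n → ℂ)
    (hu : ∀ t ∈ Metric.ball (0 : ℂ) r, ∀ i, AnalyticAt ℂ (fun s => u s i) t)
    (d : ℕ) (hd : 1 ≤ d) :
    ∃ P : MvPolynomial (Fin n) ℂ, P ≠ 0 ∧ P.totalDegree ≤ d ∧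
      ((∀ t ∈ Metric.ball (0 : ℂ) r, MvPolynomial.eval (u t) P = 0) ∨
        ∀ k < Nat.choose (n + d) n - 1,
          iteratedDeriv k (fun t => MvPolynomial.eval (u t) P) 0 = 0) := by
  classical
  set B : Set ℂ := Metric.ball (0 : ℂ) r with hB
  have hBopen : IsOpen B := Metric.isOpen_ball
  have h0B : (0 : ℂ) ∈ B := Metric.mem_ball_self hr
  have hBu : UniqueDiffOn ℂ B := hBopen.uniqueDiffOn
  set N := Nat.choose (n + d) n with hN
  have hN1 : 1 ≤ N := Nat.choose_pos (Nat.le_add_right n d)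
  set M := N - 1 with hM
  -- the exponent finset
  set T : Finset (Fin (n + 1) → ℕ) := Finset.finAntidiagonal (n + 1) d with hT
  set S : Finset (Fin n → ℕ) := T.image (fun g => g ∘ Fin.succ) with hS
  have hTcard : T.card = N := by
    have e : {f // f ∈ T} ≃ Sym (Fin (n + 1)) d :=
      (Equiv.subtypeEquivRight (fun f => Finset.mem_finAntidiagonal)).trans
        (Sym.equivNatSumOfFintype (Fin (n + 1)) d).symm
    have h1 : T.card = Fintype.card (Sym (Fin (n + 1)) d) := by
      rw [← Fintype.card_coe T]; exact Fintype.card_congr e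
    rw [h1, Sym.card_sym_eq_choose, Fintype.card_fin]
    have h2 : n + 1 + d - 1 = d + n := by omega
    rw [h2, hN]
    have := Nat.choose_symm_add (a := d) (b := n)
    rw [this]
    congr 1
    omega
  have hScard : S.card = N := by
    rw [hS, ← hTcard]
    apply Finset.card_image_of_injOn
    intro g1 h1 g2 h2 h
    have hs1 : ∑ i, g1 i = d := Finset.mem_finAntidiagonal.mp h1
    have hs2 : ∑ i, g2 i = d := Finset.mem_finAntidiagonal.mp h2
    have htail : ∀ j : Fin n, g1 j.succ = g2 j.succ := fun j => congrFun h j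
    rw [Fin.sum_univ_succ] at hs1 hs2
    have hsum : ∑ i : Fin n, g1 i.succ = ∑ i : Fin n, g2 i.succ :=
      Finset.sum_congr rfl fun j _ => htail j
    have h0 : g1 0 = g2 0 := by omega
    funext i
    refine Fin.cases h0 htail i
  have hSmem : ∀ f ∈ S, ∑ i, f i ≤ d := by
    intro f hf
    rw [hS] at hf
    obtain ⟨g, hg, rfl⟩ := Finset.mem_image.mp hf
    have hs : ∑ i, g i = d := Finset.mem_finAntidiagonal.mp hg
    rw [Fin.sum_univ_succ] at hs
    simp only [Function.comp]
    omega
  -- analyticity of evaluations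
  have hanal : ∀ (P : MvPolynomial (Fin n) ℂ), ∀ t ∈ B,
      AnalyticAt ℂ (fun s => eval (u s) P) t := by
    intro P
    induction P using MvPolynomial.induction_on with
    | C a =>
      intro t ht
      simpa using (analyticAt_const : AnalyticAt ℂ (fun _ : ℂ => a) t)
    | add p q hp hq =>
      intro t ht
      have := (hp t ht).fun_add (hq t ht)
      simpa [eval_add] using this
    | mul_X p i hp =>
      intro t ht
      have := (hp t ht).fun_mul (hu t ht i)
      simpa [eval_mul, eval_X] using this
  have hcd : ∀ (P : MvPolynomial (Fin n) ℂ) (i : ℕ),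
      ContDiffOn ℂ i (fun s => eval (u s) P) B :=
    fun P i t ht => ((hanal P t ht).contDiffAt).contDiffWithinAt
  -- the linear map of truncated derivative data
  let L : MvPolynomial (Fin n) ℂ →ₗ[ℂ] (Fin M → ℂ) :=
    { toFun := fun P k =>
        iteratedFDerivWithin ℂ k (fun s => eval (u s) P) B 0 (fun _ => 1)
      map_add' := by
        intro P Q
        funext k
        have hfun : (fun s => eval (u s) (P + Q)) =
            (fun s => eval (u s) P) + (fun s => eval (u s) Q) := by
          funext s; simp [eval_add]
        simp only [hfun]
        rw [iteratedFDerivWithin_add_apply (hcd P k 0 h0B) (hcd Q k 0 h0B) hBu h0B]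
        simp
      map_smul' := by
        intro c P
        funext k
        have hfun : (fun s => eval (u s) (c • P)) =
            c • (fun s => eval (u s) P) := by
          funext s; simp [MvPolynomial.smul_eval]
        simp only [hfun]
        rw [iteratedFDerivWithin_const_smul_apply (hcd P k 0 h0B) hBu h0B]
        simp }
  -- the monomial family
  let v : {f // f ∈ S} → MvPolynomial (Fin n) ℂ :=
    fun f => monomial (Finsupp.equivFunOnFinite.symm (f : Fin n → ℕ)) 1
  have hv : LinearIndependent ℂ v := by
    have hveq : v = (basisMonomials (Fin n) ℂ) ∘
        (fun f : {f // f ∈ S} => Finsupp.equivFunOnFinite.symm (f : Fin n → ℕ)) := by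
      funext f; simp [v, coe_basisMonomials]
    rw [hveq]
    exact (basisMonomials (Fin n) ℂ).linearIndependent.comp _
      (Finsupp.equivFunOnFinite.symm.injective.comp Subtype.val_injective)
  -- the images are linearly dependent
  have hcardS : Fintype.card {f // f ∈ S} = M + 1 := by
    rw [Fintype.card_coe, hScard]; omega
  have hnotli : ¬ LinearIndependent ℂ (fun f : {f // f ∈ S} => L (v f)) := by
    intro hli
    have := hli.fintype_card_le_finrank
    rw [hcardS, Module.finrank_fin_fun] at this
    omega
  obtain ⟨g, hg0, i0, hgi0⟩ := Fintype.not_linearIndependent_iff.mp hnotli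
  refine ⟨∑ f : {f // f ∈ S}, g f • v f, ?_, ?_, ?_⟩
  · intro hzero
    exact hgi0 (Fintype.linearIndependent_iff.mp hv g hzero i0)
  · refine (totalDegree_finset_sum _ _).trans ?_
    apply Finset.sup_le
    intro f _
    refine (totalDegree_smul_le _ _).trans ?_
    have h1 : (v f).totalDegree = (Finsupp.equivFunOnFinite.symm (f : Fin n → ℕ)).sum
        (fun _ e => e) := totalDegree_monomial _ one_ne_zero
    rw [h1, Finsupp.sum_fintype _ _ (fun _ => rfl)]
    simpa using hSmem (f : Fin n → ℕ) f.2
  · right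
    intro k hk
    have hkM : k < M := hk
    have hLzero : L (∑ f : {f // f ∈ S}, g f • v f) = 0 := by
      rw [map_sum]
      simpa using hg0
    have hL : iteratedFDerivWithin ℂ k
        (fun s => eval (u s) (∑ f : {f // f ∈ S}, g f • v f)) B 0 (fun _ => 1) = 0 := by
      have := congrFun hLzero ⟨k, hkM⟩
      exact this
    rw [iteratedDeriv_eq_iteratedFDeriv,
      ← iteratedFDerivWithin_of_isOpen k hBopen h0B]
    exact hL
end
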